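/- arXiv:1612.09391 — 5 statements merged into one kernel-verified Lean document; each statement's English description precedes it below -/
import Mathlib

section
/- Let M be a nonzero indecomposable generalized weight I₁-module whose support is contained in ℕ (i.e., every λ ∈ K with M^λ ≠ 0 is a natural number). Then FM = M. -/
open Polynomial

set_option synthInstance.maxHeartbeats 1000000
set_option maxHeartbeats 1000000

/-- Multiplication by `x` on `K[x]`. -/
noncomputable def xOp (K : Type) [Field K] : Module.End K (Polynomial K) :=
  LinearMap.mulLeft K (X : Polynomial K)

/-- Formal derivative `d/dx` on `K[x]`. -/
noncomputable def derOp (K : Type) [Field K] : Module.End K (Polynomial K) :=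
  Polynomial.derivative

/-- Integration on `K[x]`: determined by `x^n ↦ x^(n+1)/(n+1)`. -/
noncomputable def intOp (K : Type) [Field K] [CharZero K] : Module.End K (Polynomial K) :=
  Polynomial.lsum fun n => (((n : K) + 1)⁻¹) • (Polynomial.monomial (n + 1) : K →ₗ[K] Polynomial K)

/-- The algebra `I₁ = K⟨x, d/dx, ∫⟩` of polynomial integro-differential operators. -/
noncomputable def I1 (K : Type) [Field K] [CharZero K] :
    Subalgebra K (Module.End K (Polynomial K)) :=
  Algebra.adjoin K {xOp K, derOp K, intOp K}

noncomputable instance I1.instRing (K : Type) [Field K] [CharZero K] : Ring (I1 K) :=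
  inferInstance
noncomputable instance I1.instAlgebra (K : Type) [Field K] [CharZero K] : Algebra K (I1 K) :=
  inferInstance
noncomputable instance I1.instAddCommGroup (K : Type) [Field K] [CharZero K] :
    AddCommGroup (I1 K) := inferInstance
noncomputable instance I1.instModuleK (K : Type) [Field K] [CharZero K] : Module K (I1 K) :=
  inferInstance

/-- `K[x]` is an `I₁`-module via the inclusion `I₁ ⊆ End_K(K[x])`. -/
noncomputable instance I1.instModulePoly (K : Type) [Field K] [CharZero K] :
    Module (I1 K) (Polynomial K) :=
  Module.compHom (Polynomial K) (Subalgebra.val (I1 K)).toRingHom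

instance I1.instTowerPoly (K : Type) [Field K] [CharZero K] :
    IsScalarTower K (I1 K) (Polynomial K) :=
  ⟨fun c a p => by
    show ((c • a : I1 K) : Module.End K (Polynomial K)) p
        = c • ((a : Module.End K (Polynomial K)) p)
    simp⟩

/-- The element `H = ∂x` of `I₁`. -/
noncomputable def Hop (K : Type) [Field K] [CharZero K] : I1 K :=
  ⟨derOp K * xOp K,
    mul_mem (Algebra.subset_adjoin (by simp)) (Algebra.subset_adjoin (by simp))⟩

/-- The element `1 - ∫∂` of `I₁`. -/
noncomputable def eElt (K : Type) [Field K] [CharZero K] : I1 K :=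
  1 - (⟨intOp K, Algebra.subset_adjoin (by simp)⟩ : I1 K) *
      (⟨derOp K, Algebra.subset_adjoin (by simp)⟩ : I1 K)

/-- The two-sided ideal `F` of `I₁` generated by `1 - ∫∂`, regarded as a left ideal. -/
noncomputable def Fideal (K : Type) [Field K] [CharZero K] : Ideal (I1 K) :=
  Ideal.span {y | ∃ a b : I1 K, y = a * eElt K * b}

/-- The left ideal `F + I₁(H-λ)^n` of `I₁`. -/
noncomputable def Msub (K : Type) [Field K] [CharZero K] (n : ℕ) (lam : K) : Ideal (I1 K) :=
  Fideal K ⊔ Ideal.span {(Hop K - algebraMap K (I1 K) lam) ^ n}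

/-- The left `I₁`-module `M(n,λ) = I₁/(F + I₁(H-λ)^n)`. -/
abbrev Mmod (K : Type) [Field K] [CharZero K] (n : ℕ) (lam : K) :=
  I1 K ⧸ Msub K n lam

section Weight

variable (K : Type) [Field K] [CharZero K]
variable (M : Type) [AddCommGroup M] [Module K M] [Module (I1 K) M] [IsScalarTower K (I1 K) M]

noncomputable instance : SMulCommClass (I1 K) K M := SMulCommClass.symm K (I1 K) M

/-- The generalized weight space `M^λ = {m ∈ M : (H-λ)^k m = 0 for some k}`. -/
noncomputable def genWeightSpace (lam : K) : Submodule K M :=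
  ⨆ k : ℕ,
    LinearMap.ker (DistribMulAction.toLinearMap K M ((Hop K - algebraMap K (I1 K) lam) ^ k))

/-- `M` is a generalized weight module if `M = ⊕_{λ∈K} M^λ`. -/
def IsGenWeightModule : Prop :=
  letI := Classical.decEq K
  DirectSum.IsInternal fun lam : K => genWeightSpace K M lam

/-- The support of `M`: the set of `λ ∈ K` with `M^λ ≠ 0`. -/
noncomputable def suppSet : Set K := {lam : K | genWeightSpace K M lam ≠ ⊥}

end Weight

section Mod

variable (K : Type) [Field K] [CharZero K]
variable (M : Type) [AddCommGroup M] [Module (I1 K) M]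

/-- `M` is indecomposable: it is not the direct sum of two nonzero submodules. -/
def IsIndecomposableMod : Prop :=
  ¬ ∃ N₁ N₂ : Submodule (I1 K) M, N₁ ≠ ⊥ ∧ N₂ ≠ ⊥ ∧ IsCompl N₁ N₂

/-- The submodule `FM` of `M`. -/
noncomputable def FMsub : Submodule (I1 K) M :=
  Submodule.span (I1 K) {m : M | ∃ f ∈ Fideal K, ∃ x : M, m = f • x}

/-- `M` has length `n`: there is a composition series `⊥ = M₀ ⋖ ⋯ ⋖ Mₙ = ⊤`. -/
def HasLength (n : ℕ) : Prop :=
  ∃ s : CompositionSeries (Submodule (I1 K) M), s.head = ⊥ ∧ s.last = ⊤ ∧ s.length = n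

end Mod

section Aux

variable (K : Type) [Field K] [CharZero K]

noncomputable def ddElt : I1 K := ⟨derOp K, Algebra.subset_adjoin (by simp)⟩
noncomputable def iiElt : I1 K := ⟨intOp K, Algebra.subset_adjoin (by simp)⟩

lemma eElt_eq : eElt K = 1 - iiElt K * ddElt K := rfl

lemma ii_mul_dd : iiElt K * ddElt K = 1 - eElt K := by
  rw [eElt_eq, sub_sub_cancel]

lemma der_mul_x : derOp K * xOp K = xOp K * derOp K + 1 := by
  apply LinearMap.ext
  intro p
  simp [derOp, xOp, Module.End.mul_apply, Polynomial.derivative_mul]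
  ring

lemma dd_Hop : ddElt K * Hop K = Hop K * ddElt K + ddElt K := by
  apply Subtype.ext
  show derOp K * (derOp K * xOp K) = derOp K * xOp K * derOp K + derOp K
  conv_lhs => rw [der_mul_x]
  noncomm_ring

lemma dd_weight (lam : K) :
    ddElt K * (Hop K - algebraMap K (I1 K) lam)
      = (Hop K - algebraMap K (I1 K) (lam - 1)) * ddElt K := by
  have hc : ddElt K * algebraMap K (I1 K) lam = algebraMap K (I1 K) lam * ddElt K :=
    (Algebra.commutes lam (ddElt K)).symm
  calc ddElt K * (Hop K - algebraMap K (I1 K) lam)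
      = ddElt K * Hop K - ddElt K * algebraMap K (I1 K) lam := mul_sub _ _ _
    _ = (Hop K * ddElt K + ddElt K) - algebraMap K (I1 K) lam * ddElt K := by
        rw [dd_Hop, hc]
    _ = (Hop K - algebraMap K (I1 K) (lam - 1)) * ddElt K := by
        rw [map_sub, map_one]; noncomm_ring

lemma dd_weight_pow (lam : K) (k : ℕ) :
    ddElt K * (Hop K - algebraMap K (I1 K) lam) ^ k
      = (Hop K - algebraMap K (I1 K) (lam - 1)) ^ k * ddElt K := by
  induction k with
  | zero => simp
  | succ k ih =>
    rw [pow_succ, pow_succ, ← mul_assoc, ih, mul_assoc, dd_weight, ← mul_assoc]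

variable (M : Type) [AddCommGroup M] [Module K M] [Module (I1 K) M] [IsScalarTower K (I1 K) M]

lemma e_smul_mem (x : M) : eElt K • x ∈ FMsub K M :=
  Submodule.subset_span ⟨eElt K, Ideal.subset_span ⟨1, 1, by simp⟩, x, rfl⟩

lemma dd_smul_not_mem {v : M} (hv : v ∉ FMsub K M) : ddElt K • v ∉ FMsub K M := by
  intro h
  apply hv
  have h1 : iiElt K • (ddElt K • v) ∈ FMsub K M := Submodule.smul_mem _ _ h
  have h2 : iiElt K • (ddElt K • v) = v - eElt K • v := by
    rw [← mul_smul, ii_mul_dd, sub_smul, one_smul]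
  have h3 := Submodule.add_mem _ h1 (e_smul_mem K M v)
  rwa [h2, sub_add_cancel] at h3

lemma descend (t : ℕ) : ∀ (lam : K) (k : ℕ) (v : M), v ∉ FMsub K M →
    ((Hop K - algebraMap K (I1 K) lam) ^ k) • v = 0 →
    ∃ w : M, w ∉ FMsub K M ∧ ((Hop K - algebraMap K (I1 K) (lam - t)) ^ k) • w = 0 := by
  induction t with
  | zero =>
    intro lam k v hv h0
    exact ⟨v, hv, by simpa using h0⟩
  | succ t ih =>
    intro lam k v hv h0
    have hd : ((Hop K - algebraMap K (I1 K) (lam - 1)) ^ k) • (ddElt K • v) = 0 := by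
      rw [← mul_smul, ← dd_weight_pow, mul_smul, h0, smul_zero]
    obtain ⟨w, hw, h0'⟩ := ih (lam - 1) k (ddElt K • v) (dd_smul_not_mem K M hv) hd
    refine ⟨w, hw, ?_⟩
    have he : lam - 1 - (t : K) = lam - ((t + 1 : ℕ) : K) := by push_cast; ring
    rwa [he] at h0'

end Aux

/-- Let `M` be a nonzero indecomposable generalized weight `I₁`-module whose
support is contained in `ℕ`. Then `FM = M`. -/
theorem stmt_6 (K : Type) [Field K] [CharZero K]
    (M : Type) [AddCommGroup M] [Module K M] [Module (I1 K) M] [IsScalarTower K (I1 K) M]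
    [Nontrivial M]
    (hind : IsIndecomposableMod K M) (hgw : IsGenWeightModule K M)
    (hsupp : ∀ lam ∈ suppSet K M, ∃ k : ℕ, lam = (k : K)) :
    FMsub K M = ⊤ := by
  classical
  by_contra hne
  obtain ⟨m, hm⟩ : ∃ m : M, m ∉ FMsub K M := by
    by_contra h
    push_neg at h
    exact hne (eq_top_iff.mpr fun x _ => h x)
  unfold IsGenWeightModule at hgw
  obtain ⟨d, hd⟩ := hgw.surjective m
  rw [DirectSum.coeAddMonoidHom_eq_dfinsuppSum] at hd
  obtain ⟨lam, hlam⟩ : ∃ lam : K, (d lam : M) ∉ FMsub K M := by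
    by_contra h
    push_neg at h
    apply hm
    rw [← hd, DFinsupp.sum]
    exact Submodule.sum_mem _ fun i _ => h i
  have hne0 : (d lam : M) ≠ 0 := fun h => hlam (h ▸ (FMsub K M).zero_mem)
  have hsup : lam ∈ suppSet K M := by
    show genWeightSpace K M lam ≠ ⊥
    rw [Submodule.ne_bot_iff]
    exact ⟨(d lam : M), (d lam).2, hne0⟩
  obtain ⟨n, hn⟩ := hsupp lam hsup
  have hmono : Monotone (fun k : ℕ => LinearMap.ker
      (DistribMulAction.toLinearMap K M ((Hop K - algebraMap K (I1 K) lam) ^ k))) := by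
    apply monotone_nat_of_le_succ
    intro k x hx
    simp only [LinearMap.mem_ker, DistribMulAction.toLinearMap, DistribSMul.toLinearMap_apply] at *
    rw [pow_succ', mul_smul, hx, smul_zero]
  obtain ⟨k, hk⟩ := (Submodule.mem_iSup_of_directed _ hmono.directed_le).mp (d lam).2
  have hk' : ((Hop K - algebraMap K (I1 K) lam) ^ k) • (d lam : M) = 0 := by
    simpa only [LinearMap.mem_ker, DistribMulAction.toLinearMap, DistribSMul.toLinearMap_apply] using hk
  obtain ⟨w, hw, h0⟩ := descend K M (n + 1) lam k (d lam : M) hlam hk'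
  have he : lam - ((n + 1 : ℕ) : K) = (-1 : K) := by rw [hn]; push_cast; ring
  rw [he] at h0
  have hwmem : w ∈ genWeightSpace K M (-1) :=
    le_iSup (fun k : ℕ => LinearMap.ker
      (DistribMulAction.toLinearMap K M ((Hop K - algebraMap K (I1 K) (-1 : K)) ^ k))) k
      (by simpa only [LinearMap.mem_ker, DistribMulAction.toLinearMap, DistribSMul.toLinearMap_apply] using h0)
  have hbot : genWeightSpace K M (-1) = ⊥ := by
    by_contra hb
    obtain ⟨j, hj⟩ := hsupp (-1) hb
    have hz : ((j : K) + 1) = 0 := by rw [← hj]; ring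
    exact Nat.cast_add_one_ne_zero j hz
  rw [hbot, Submodule.mem_bot] at hwmem
  exact hw (hwmem ▸ (FMsub K M).zero_mem)
end

section
/- For every integer n ≥ 1 and every λ ∈ K, every short exact sequence of I₁-modules 0 → K[x] → E → M(n,λ) → 0 splits; that is, Ext¹_{I₁}(M(n,λ), K[x]) = 0. -/
open Polynomial

set_option synthInstance.maxHeartbeats 1000000
set_option maxHeartbeats 1000000

set_option linter.unusedSectionVars false

section Lemmas
variable (K : Type) [Field K] [CharZero K]

noncomputable def Del : I1 K := ⟨derOp K, Algebra.subset_adjoin (by simp)⟩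
noncomputable def Jop : I1 K := ⟨intOp K, Algebra.subset_adjoin (by simp)⟩
noncomputable def Xop : I1 K := ⟨xOp K, Algebra.subset_adjoin (by simp)⟩

lemma I1_smul (a : I1 K) (p : Polynomial K) :
    a • p = (a : Module.End K (Polynomial K)) p := rfl

lemma I1_val_mul (a b : I1 K) :
    ((a * b : I1 K) : Module.End K (Polynomial K)) = (a : Module.End K (Polynomial K)) * b := rfl

lemma xOp_monomial (k : ℕ) (c : K) : xOp K (monomial k c) = monomial (k+1) c := by
  simp [xOp, LinearMap.mulLeft_apply, X_mul_monomial]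

lemma intOp_monomial (k : ℕ) (c : K) :
    intOp K (monomial k c) = (((k:K)+1)⁻¹) • monomial (k+1) c := by
  simp [intOp]

lemma derOp_monomial (k : ℕ) (c : K) :
    derOp K (monomial k c) = monomial (k-1) (c * k) := by
  simp [derOp, derivative_monomial]

-- e acting on monomials
lemma eElt_smul_monomial (k : ℕ) (c : K) :
    eElt K • (monomial k c : Polynomial K) = if k = 0 then monomial 0 c else 0 := by
  rw [I1_smul]
  show ((1 : Module.End K (Polynomial K)) - intOp K * derOp K) (monomial k c) = _
  cases k with
  | zero => simp [derOp]
  | succ k =>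
      simp only [LinearMap.sub_apply, Module.End.mul_apply, Module.End.one_apply,
        derOp_monomial, intOp_monomial, Nat.add_sub_cancel, if_neg (Nat.succ_ne_zero k),
        smul_monomial]
      rw [sub_eq_zero]
      congr 1
      have hk : ((k:K)+1) ≠ 0 := Nat.cast_add_one_ne_zero k
      push_cast
      rw [smul_eq_mul, mul_comm c, ← mul_assoc, inv_mul_cancel₀ hk, one_mul]

lemma Del_smul_monomial (m : ℕ) (c : K) :
    Del K • (monomial m c : Polynomial K) = monomial (m-1) (c * m) := by
  rw [I1_smul]; exact derOp_monomial K m c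

lemma Xop_smul_monomial (m : ℕ) (c : K) :
    Xop K • (monomial m c : Polynomial K) = monomial (m+1) c := by
  rw [I1_smul]; exact xOp_monomial K m c

lemma Jop_smul_monomial (m : ℕ) (c : K) :
    Jop K • (monomial m c : Polynomial K) = (((m:K)+1)⁻¹) • monomial (m+1) c := by
  rw [I1_smul]; exact intOp_monomial K m c

lemma Del_pow_smul_monomial (j m : ℕ) (c : K) :
    (Del K ^ j) • (monomial m c : Polynomial K)
      = monomial (m - j) (c * (m.descFactorial j : K)) := by
  induction j with
  | zero => simp
  | succ j ih =>
      rw [pow_succ', mul_smul, ih, Del_smul_monomial, Nat.descFactorial_succ]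
      have h1 : m - 1 - j = m - (j+1) := by omega
      have h2 : m - j - 1 = m - (j+1) := by omega
      rw [show m - j - 1 = m - (j+1) from h2]
      congr 1
      push_cast
      ring

lemma eD_pow_smul_monomial (j m : ℕ) (c : K) :
    (eElt K * Del K ^ j) • (monomial m c : Polynomial K)
      = if m = j then monomial 0 (c * (j.factorial : K)) else 0 := by
  rw [mul_smul, Del_pow_smul_monomial, eElt_smul_monomial]
  rcases lt_trichotomy m j with h | h | h
  · rw [if_neg h.ne, Nat.descFactorial_eq_zero_iff_lt.2 h]
    simp
  · subst h
    rw [if_pos rfl, if_pos (Nat.sub_self m), Nat.descFactorial_self]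
  · rw [if_neg (by omega), if_neg (by omega)]

lemma Hop_smul_monomial (m : ℕ) (c : K) :
    Hop K • (monomial m c : Polynomial K) = ((m:K)+1) • monomial m c := by
  rw [I1_smul]
  show (derOp K * xOp K) (monomial m c) = _
  rw [Module.End.mul_apply, xOp_monomial, derOp_monomial, Nat.add_sub_cancel, smul_monomial,
    smul_eq_mul]
  congr 1
  push_cast; ring

lemma HlamPow_smul_monomial (lam : K) (n m : ℕ) (c : K) :
    ((Hop K - algebraMap K (I1 K) lam)^n) • (monomial m c : Polynomial K)
      = (((m:K)+1-lam)^n) • monomial m c := by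
  induction n with
  | zero => simp
  | succ n ih =>
      rw [pow_succ', mul_smul, ih, smul_comm,
        show (Hop K - algebraMap K (I1 K) lam) • (monomial m c : Polynomial K)
          = Hop K • monomial m c - algebraMap K (I1 K) lam • monomial m c from sub_smul _ _ _,
        Hop_smul_monomial,
        show algebraMap K (I1 K) lam • (monomial m c : Polynomial K) = lam • monomial m c
          from rfl, ← sub_smul, smul_smul, ← pow_succ]

lemma I1_ext {a b : I1 K}
    (h : ∀ m c, a • (monomial m c : Polynomial K) = b • monomial m c) : a = b :=
  Subtype.ext (Polynomial.lhom_ext' fun m => LinearMap.ext fun c => h m c)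

lemma eElt_mul_Xop : eElt K * Xop K = 0 := by
  refine I1_ext K fun m c => ?_
  rw [mul_smul, Xop_smul_monomial, eElt_smul_monomial, if_neg (Nat.succ_ne_zero m), zero_smul]

lemma eElt_mul_Jop : eElt K * Jop K = 0 := by
  refine I1_ext K fun m c => ?_
  rw [mul_smul, Jop_smul_monomial, smul_comm, eElt_smul_monomial,
    if_neg (Nat.succ_ne_zero m), smul_zero, zero_smul]

lemma Del_mul_Jop : Del K * Jop K = 1 := by
  refine I1_ext K fun m c => ?_
  rw [mul_smul, Jop_smul_monomial, smul_comm, Del_smul_monomial, Nat.add_sub_cancel,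
    one_smul, smul_monomial]
  congr 1
  have hm : ((m:K)+1) ≠ 0 := Nat.cast_add_one_ne_zero m
  push_cast
  field_simp
  rw [smul_eq_mul]; field_simp

lemma eD_mul_Xop (j : ℕ) :
    eElt K * Del K ^ (j+1) * Xop K = ((j:K)+1) • (eElt K * Del K ^ j) := by
  refine I1_ext K fun m c => ?_
  rw [mul_smul, Xop_smul_monomial, eD_pow_smul_monomial, smul_assoc, eD_pow_smul_monomial]
  by_cases h : m = j
  · subst h
    rw [if_pos rfl, if_pos rfl, smul_monomial, smul_eq_mul, Nat.factorial_succ]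
    congr 1
    push_cast; ring
  · rw [if_neg (by omega), if_neg h, smul_zero]

lemma eD_mul_Jop (j : ℕ) :
    eElt K * Del K ^ (j+1) * Jop K = eElt K * Del K ^ j := by
  rw [pow_succ, ← mul_assoc, mul_assoc _ (Del K) (Jop K), Del_mul_Jop, mul_one]

lemma eD_mul_Hop (j : ℕ) :
    eElt K * Del K ^ j * Hop K = ((j:K)+1) • (eElt K * Del K ^ j) := by
  refine I1_ext K fun m c => ?_
  rw [mul_smul, Hop_smul_monomial, smul_comm, smul_assoc, eD_pow_smul_monomial]
  by_cases h : m = j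
  · subst h; rw [if_pos rfl]
  · rw [if_neg h, smul_zero, smul_zero]

lemma eD_mul_Hlam (lam : K) (j : ℕ) :
    eElt K * Del K ^ j * (Hop K - algebraMap K (I1 K) lam)
      = (((j:K)+1-lam)) • (eElt K * Del K ^ j) := by
  rw [mul_sub, eD_mul_Hop, ← Algebra.commutes lam, ← Algebra.smul_def, sub_smul]

lemma eD_mul_HlamPow (lam : K) (j n : ℕ) :
    eElt K * Del K ^ j * (Hop K - algebraMap K (I1 K) lam)^n
      = (((j:K)+1-lam)^n) • (eElt K * Del K ^ j) := by
  induction n with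
  | zero => simp
  | succ n ih =>
      rw [pow_succ, ← mul_assoc, ih, smul_mul_assoc, eD_mul_Hlam, smul_smul, ← pow_succ]

lemma Hop_mul_eElt : Hop K * eElt K = eElt K := by
  refine I1_ext K fun m c => ?_
  by_cases h : m = 0
  · subst h
    have h1 := eElt_smul_monomial K 0 c
    rw [if_pos rfl] at h1
    rw [mul_smul, h1, Hop_smul_monomial]
    norm_num
  · simp [mul_smul, eElt_smul_monomial, h]

noncomputable def Wsp : Submodule K (I1 K) :=
  Submodule.span K (Set.range fun j : ℕ => eElt K * Del K ^ j)

lemma Wsp_mem (j : ℕ) : eElt K * Del K ^ j ∈ Wsp K :=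
  Submodule.subset_span ⟨j, rfl⟩

lemma eElt_mem_Wsp : eElt K ∈ Wsp K := by
  have := Wsp_mem K 0
  rwa [pow_zero, mul_one] at this

lemma Wsp_mul_Xop : ∀ w ∈ Wsp K, w * Xop K ∈ Wsp K := by
  intro w hw
  induction hw using Submodule.span_induction with
  | mem x hx =>
      obtain ⟨j, rfl⟩ := hx
      cases j with
      | zero =>
          show eElt K * Del K ^ 0 * Xop K ∈ Wsp K
          rw [pow_zero, mul_one, eElt_mul_Xop]; exact zero_mem _
      | succ j =>
          show eElt K * Del K ^ (j+1) * Xop K ∈ Wsp K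
          rw [eD_mul_Xop]; exact Submodule.smul_mem _ _ (Wsp_mem K j)
  | zero => rw [zero_mul]; exact zero_mem _
  | add x y hx hy ihx ihy => rw [add_mul]; exact add_mem ihx ihy
  | smul c x hx ih => rw [smul_mul_assoc]; exact Submodule.smul_mem _ _ ih

lemma Wsp_mul_Jop : ∀ w ∈ Wsp K, w * Jop K ∈ Wsp K := by
  intro w hw
  induction hw using Submodule.span_induction with
  | mem x hx =>
      obtain ⟨j, rfl⟩ := hx
      cases j with
      | zero =>
          show eElt K * Del K ^ 0 * Jop K ∈ Wsp K
          rw [pow_zero, mul_one, eElt_mul_Jop]; exact zero_mem _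
      | succ j =>
          show eElt K * Del K ^ (j+1) * Jop K ∈ Wsp K
          rw [eD_mul_Jop]; exact Wsp_mem K j
  | zero => rw [zero_mul]; exact zero_mem _
  | add x y hx hy ihx ihy => rw [add_mul]; exact add_mem ihx ihy
  | smul c x hx ih => rw [smul_mul_assoc]; exact Submodule.smul_mem _ _ ih

lemma Wsp_mul_Del : ∀ w ∈ Wsp K, w * Del K ∈ Wsp K := by
  intro w hw
  induction hw using Submodule.span_induction with
  | mem x hx =>
      obtain ⟨j, rfl⟩ := hx
      show eElt K * Del K ^ j * Del K ∈ Wsp K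
      rw [mul_assoc, ← pow_succ]
      exact Wsp_mem K (j+1)
  | zero => rw [zero_mul]; exact zero_mem _
  | add x y hx hy ihx ihy => rw [add_mul]; exact add_mem ihx ihy
  | smul c x hx ih => rw [smul_mul_assoc]; exact Submodule.smul_mem _ _ ih

noncomputable def Wstab : Subalgebra K (I1 K) where
  carrier := {b | ∀ w ∈ Wsp K, w * b ∈ Wsp K}
  mul_mem' := fun {a b} ha hb w hw => by
    rw [← mul_assoc]; exact hb _ (ha w hw)
  one_mem' := fun w hw => by rwa [mul_one]
  add_mem' := fun {a b} ha hb w hw => by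
    rw [mul_add]; exact add_mem (ha w hw) (hb w hw)
  algebraMap_mem' := fun r w hw => by
    rw [← Algebra.commutes, ← Algebra.smul_def]
    exact Submodule.smul_mem _ r hw

lemma mem_map_of_val {S : Subalgebra K (I1 K)}
    (hX : Xop K ∈ S) (hD : Del K ∈ S) (hJ : Jop K ∈ S) (b : I1 K) : b ∈ S := by
  have hle : Algebra.adjoin K {xOp K, derOp K, intOp K}
      ≤ S.map (Subalgebra.val (I1 K)) := by
    rw [Algebra.adjoin_le_iff]
    rintro u (rfl | rfl | rfl)
    · exact ⟨Xop K, hX, rfl⟩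
    · exact ⟨Del K, hD, rfl⟩
    · exact ⟨Jop K, hJ, rfl⟩
  obtain ⟨s, hs, hval⟩ := hle b.2
  have : s = b := Subtype.ext hval
  rwa [this] at hs

lemma Wsp_mul_mem (b : I1 K) : ∀ w ∈ Wsp K, w * b ∈ Wsp K := by
  have hb : b ∈ Wstab K := by
    refine mem_map_of_val K ?_ ?_ ?_ b
    · exact Wsp_mul_Xop K
    · exact Wsp_mul_Del K
    · exact Wsp_mul_Jop K
  exact hb

noncomputable def eGood : Subalgebra K (I1 K) where
  carrier := {b | eElt K * b ∈ Wsp K}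
  mul_mem' := fun {a b} ha hb => by
    show eElt K * (a * b) ∈ Wsp K
    rw [← mul_assoc]
    exact Wsp_mul_mem K b _ ha
  one_mem' := by
    show eElt K * 1 ∈ Wsp K
    rw [mul_one]; exact eElt_mem_Wsp K
  add_mem' := fun {a b} ha hb => by
    show eElt K * (a + b) ∈ Wsp K
    rw [mul_add]; exact add_mem ha hb
  algebraMap_mem' := fun r => by
    show eElt K * algebraMap K (I1 K) r ∈ Wsp K
    rw [← Algebra.commutes, ← Algebra.smul_def]
    exact Submodule.smul_mem _ r (eElt_mem_Wsp K)

lemma eElt_mul_mem_Wsp (b : I1 K) : eElt K * b ∈ Wsp K := by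
  have hb : b ∈ eGood K := by
    refine mem_map_of_val K ?_ ?_ ?_ b
    · show eElt K * Xop K ∈ Wsp K
      rw [eElt_mul_Xop]; exact zero_mem _
    · show eElt K * Del K ∈ Wsp K
      have := Wsp_mem K 1
      rwa [pow_one] at this
    · show eElt K * Jop K ∈ Wsp K
      rw [eElt_mul_Jop]; exact zero_mem _
  exact hb

lemma eElt_mul_smul_eq_zero {E : Type} [AddCommGroup E] [Module (I1 K) E] (v : E)
    (hv : ∀ j : ℕ, (eElt K * Del K ^ j) • v = 0) (b : I1 K) : (eElt K * b) • v = 0 := by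
  have h1 : ∀ w ∈ Wsp K, w • v = 0 := by
    intro w hw
    induction hw using Submodule.span_induction with
    | mem x hx => obtain ⟨j, rfl⟩ := hx; exact hv j
    | zero => rw [zero_smul]
    | add x y hx hy ihx ihy => rw [add_smul, ihx, ihy, add_zero]
    | smul c x hx ih => rw [Algebra.smul_def, mul_smul, ih, smul_zero]
  exact h1 _ (eElt_mul_mem_Wsp K b)

end Lemmas

set_option maxHeartbeats 20000000 in
/-- For every integer `n ≥ 1` and every `λ ∈ K`, every short exact sequence of
`I₁`-modules `0 → K[x] → E → M(n,λ) → 0` splits; that is, `Ext¹(M(n,λ), K[x]) = 0`. -/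
theorem stmt_8 (K : Type) [Field K] [CharZero K] (n : ℕ) (hn : 1 ≤ n) (lam : K)
    (E : Type) [AddCommGroup E] [Module (I1 K) E]
    (f : Polynomial K →ₗ[I1 K] E) (g : E →ₗ[I1 K] Mmod K n lam)
    (hf : Function.Injective f) (hg : Function.Surjective g)
    (hfg : LinearMap.range f = LinearMap.ker g) :
    ∃ h : Mmod K n lam →ₗ[I1 K] E, g.comp h = LinearMap.id := by
  classical
  have hn' : n ≠ 0 := Nat.one_le_iff_ne_zero.mp hn
  obtain ⟨Hn, hHn⟩ : ∃ Hn : I1 K, Hn = (Hop K - algebraMap K (I1 K) lam) ^ n := ⟨_, rfl⟩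
  obtain ⟨eE, heE⟩ := hg (Submodule.Quotient.mk 1)
  have hker : ∀ v : E, g v = 0 → ∃ q : Polynomial K, f q = v := by
    intro v hv
    have : v ∈ LinearMap.range f := hfg ▸ LinearMap.mem_ker.2 hv
    exact this
  have hkerf : ∀ q : Polynomial K, g (f q) = 0 := by
    intro q
    have : f q ∈ LinearMap.ker g := hfg ▸ LinearMap.mem_range_self f q
    exact this
  have hmk0 : ∀ z : I1 K, z ∈ Msub K n lam →
      (Submodule.Quotient.mk z : Mmod K n lam) = 0 :=
    fun z hz => (Submodule.Quotient.mk_eq_zero _).2 hz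
  have hHlam_mem : Hn ∈ Msub K n lam := by
    rw [hHn]
    exact Submodule.mem_sup_right (Submodule.subset_span rfl)
  have heD_mem : ∀ j : ℕ, eElt K * Del K ^ j ∈ Msub K n lam := by
    intro j
    exact Submodule.mem_sup_left (Submodule.subset_span ⟨1, Del K ^ j, by rw [one_mul]⟩)
  have hsmul_mk : ∀ a : I1 K,
      a • (Submodule.Quotient.mk 1 : Mmod K n lam) = Submodule.Quotient.mk a := by
    intro a
    rw [← Submodule.Quotient.mk_smul, smul_eq_mul, mul_one]
  -- the preimage q of Hn • eE
  have hq0 : g (Hn • eE) = 0 := by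
    rw [map_smul, heE, hsmul_mk, hmk0 _ hHlam_mem]
  obtain ⟨q, hq⟩ := hker _ hq0
  -- the correction polynomial p and residue r
  obtain ⟨p, hp⟩ : ∃ p : Polynomial K,
      p = ∑ k ∈ q.support, ((((k:K)+1-lam)^n)⁻¹) • monomial k (q.coeff k) := ⟨_, rfl⟩
  obtain ⟨r, hrdef⟩ : ∃ r : Polynomial K,
      r = ∑ k ∈ q.support, if ((k:K)+1-lam) = 0 then monomial k (q.coeff k) else 0 := ⟨_, rfl⟩
  have key : ∀ (k : ℕ) (c : K),
      Hn • (((((k:K)+1-lam)^n)⁻¹) • (monomial k c : Polynomial K))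
        = if ((k:K)+1-lam) = 0 then 0 else monomial k c := by
    intro k c
    rw [smul_comm, hHn, HlamPow_smul_monomial, smul_smul]
    by_cases hb : ((k:K)+1-lam) = 0
    · rw [if_pos hb, hb, zero_pow hn', inv_zero, zero_mul, zero_smul]
    · rw [if_neg hb, inv_mul_cancel₀ (pow_ne_zero _ hb), one_smul]
  have hHnp : Hn • p = q - r := by
    rw [hp, Finset.smul_sum]
    have h1 : ∀ k ∈ q.support,
        Hn • (((((k:K)+1-lam)^n)⁻¹) • (monomial k (q.coeff k) : Polynomial K))
          = monomial k (q.coeff k) - (if ((k:K)+1-lam) = 0 then monomial k (q.coeff k) else 0) := by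
      intro k _
      rw [key]
      by_cases hb : ((k:K)+1-lam) = 0
      · rw [if_pos hb, if_pos hb, sub_self]
      · rw [if_neg hb, if_neg hb, sub_zero]
    rw [Finset.sum_congr rfl h1, Finset.sum_sub_distrib, ← hrdef,
      ← Polynomial.as_sum_support q]
  obtain ⟨e1, he1def⟩ : ∃ e1 : E, e1 = eE - f p := ⟨_, rfl⟩
  have hfr : f r = Hn • e1 := by
    rw [he1def, smul_sub, ← hq, ← map_smul, hHnp, ← map_sub, sub_sub_cancel]
  -- the residue vanishes
  have hr0 : r = 0 := by
    rw [hrdef]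
    refine Finset.sum_eq_zero ?_
    intro k hk
    by_cases hbase : ((k:K)+1-lam) = 0
    · rw [if_pos hbase]
      have h2 : (eElt K * Del K ^ k) • f r = 0 := by
        rw [hfr, ← mul_smul, hHn]
        rw [show eElt K * Del K ^ k * (Hop K - algebraMap K (I1 K) lam) ^ n
            = (((k:K)+1-lam)^n) • (eElt K * Del K ^ k) from eD_mul_HlamPow K lam k n]
        rw [hbase, zero_pow hn', zero_smul, zero_smul]
      rw [← map_smul] at h2
      have h3 : (eElt K * Del K ^ k) • r = 0 := by
        apply hf
        rw [h2, map_zero]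
      have h4 : (eElt K * Del K ^ k) • r = monomial 0 (q.coeff k * (k.factorial : K)) := by
        rw [hrdef, Finset.smul_sum, Finset.sum_eq_single k]
        · rw [if_pos hbase, eD_pow_smul_monomial, if_pos rfl]
        · intro k' _ hne
          by_cases hb' : ((k':K)+1-lam) = 0
          · exfalso
            apply hne
            have : ((k':K)) = ((k:K)) :=
              add_right_cancel ((sub_eq_zero.mp hb').trans (sub_eq_zero.mp hbase).symm)
            exact_mod_cast this
          · rw [if_neg hb', smul_zero]
        · intro hk'; exact absurd hk hk'
      rw [h4] at h3
      have h5 : q.coeff k * (k.factorial : K) = 0 := by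
        by_contra hne
        exact hne (by simpa using h3)
      have h6 : q.coeff k = 0 := by
        have : (k.factorial : K) ≠ 0 := Nat.cast_ne_zero.mpr (Nat.factorial_ne_zero k)
        exact (mul_eq_zero.mp h5).resolve_right this
      rw [h6, monomial_zero_right]
    · rw [if_neg hbase]
  have hHne1 : Hn • e1 = 0 := by rw [← hfr, hr0, map_zero]
  have hge1 : g e1 = Submodule.Quotient.mk 1 := by
    rw [he1def, map_sub, heE, hkerf, sub_zero]
  -- weight vanishing away from lam
  have hwj : ∀ j : ℕ, ((j:K)+1) ≠ lam → (eElt K * Del K ^ j) • e1 = 0 := by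
    intro j hj
    have hc : (((j:K)+1-lam)^n) ≠ 0 := pow_ne_zero _ (sub_ne_zero.2 hj)
    have h2 : (algebraMap K (I1 K) (((j:K)+1-lam)^n)) • ((eElt K * Del K ^ j) • e1) = 0 := by
      rw [← mul_smul]
      have h3 : algebraMap K (I1 K) (((j:K)+1-lam)^n) * (eElt K * Del K ^ j)
          = eElt K * Del K ^ j * Hn := by
        rw [hHn, eD_mul_HlamPow, Algebra.smul_def]
      rw [h3, mul_smul, hHne1, smul_zero]
    calc (eElt K * Del K ^ j) • e1
        = (1 : I1 K) • ((eElt K * Del K ^ j) • e1) := (one_smul _ _).symm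
      _ = 0 := by
          rw [show (1 : I1 K) = algebraMap K (I1 K) ((((j:K)+1-lam)^n)⁻¹)
              * algebraMap K (I1 K) (((j:K)+1-lam)^n) by
            rw [← map_mul, inv_mul_cancel₀ hc, map_one]]
          rw [mul_smul, h2, smul_zero]
  -- find ε satisfying all three properties
  suffices hP : ∃ ε : E, g ε = Submodule.Quotient.mk 1 ∧ Hn • ε = 0 ∧
      ∀ j : ℕ, (eElt K * Del K ^ j) • ε = 0 by
    obtain ⟨ε, hgε, hP2, hP3⟩ := hP
    have hle : Msub K n lam ≤ LinearMap.ker (LinearMap.toSpanSingleton (I1 K) E ε) := by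
      refine sup_le ?_ ?_
      · unfold Fideal
        rw [Ideal.span_le]
        rintro y ⟨a, b, rfl⟩
        simp only [SetLike.mem_coe, LinearMap.mem_ker, LinearMap.toSpanSingleton_apply]
        rw [mul_assoc, mul_smul, eElt_mul_smul_eq_zero K ε hP3 b, smul_zero]
      · rw [Ideal.span_le, Set.singleton_subset_iff]
        simp only [SetLike.mem_coe, LinearMap.mem_ker, LinearMap.toSpanSingleton_apply]
        rw [← hHn]
        exact hP2
    refine ⟨Submodule.liftQ _ (LinearMap.toSpanSingleton (I1 K) E ε) hle, ?_⟩
    apply LinearMap.ext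
    intro m
    obtain ⟨a, rfl⟩ := Submodule.Quotient.mk_surjective _ m
    rw [LinearMap.comp_apply, Submodule.liftQ_apply, LinearMap.toSpanSingleton_apply,
      map_smul, hgε, hsmul_mk, LinearMap.id_apply]
  by_cases hex : ∃ j0 : ℕ, ((j0:K)+1) = lam
  · obtain ⟨j0, hj0⟩ := hex
    have hw_mem : g ((eElt K * Del K ^ j0) • e1) = 0 := by
      rw [map_smul, hge1, hsmul_mk, hmk0 _ (heD_mem j0)]
    obtain ⟨s, hs⟩ := hker _ hw_mem
    have hHw : Hop K • s = s := by
      apply hf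
      rw [map_smul, hs, ← mul_smul, ← mul_assoc, Hop_mul_eElt]
    have hs_coeff : ∀ k : ℕ, k ≠ 0 → s.coeff k = 0 := by
      intro k hk
      have h1 : (Hop K • s).coeff k = s.coeff k * ((k:K)+1) := by
        rw [I1_smul]
        show ((derOp K * xOp K) s).coeff k = _
        rw [Module.End.mul_apply]
        show (derivative ((X : Polynomial K) * s)).coeff k = _
        rw [coeff_derivative, coeff_X_mul]
      rw [hHw] at h1
      have h2 : s.coeff k * (k:K) = 0 := by linear_combination -h1
      have h3 : ((k:K)) ≠ 0 := Nat.cast_ne_zero.mpr hk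
      exact (mul_eq_zero.mp h2).resolve_right h3
    have hs_eq : s = monomial 0 (s.coeff 0) := by
      ext k
      by_cases hk : k = 0
      · subst hk; rw [coeff_monomial, if_pos rfl]
      · rw [hs_coeff k hk, coeff_monomial, if_neg fun h => hk h.symm]
    set α : K := s.coeff 0 / (j0.factorial : K) with hα
    set t : Polynomial K := monomial j0 α with ht
    refine ⟨e1 - f t, ?_, ?_, ?_⟩
    · rw [map_sub, hge1, hkerf, sub_zero]
    · rw [smul_sub, hHne1, ← map_smul, ht]
      have : Hn • (monomial j0 α : Polynomial K) = 0 := by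
        rw [hHn, HlamPow_smul_monomial, hj0, sub_self, zero_pow hn', zero_smul]
      rw [this, map_zero, sub_zero]
    · intro j
      rw [smul_sub, ← map_smul]
      by_cases hj : j = j0
      · subst hj
        have hαj : α * (j.factorial : K) = s.coeff 0 := by
          rw [hα, div_mul_cancel₀]
          exact Nat.cast_ne_zero.mpr (Nat.factorial_ne_zero j)
        rw [← hs, ht, eD_pow_smul_monomial, if_pos rfl, hαj, ← hs_eq, sub_self]
      · have hcast : ((j:K)+1) ≠ lam := by
          rw [← hj0]
          intro hcontra
          exact hj (by exact_mod_cast add_right_cancel hcontra)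
        rw [hwj j hcast, ht, eD_pow_smul_monomial, if_neg (fun h => hj h.symm), map_zero,
          sub_zero]
  · refine ⟨e1, hge1, hHne1, fun j => hwj j fun h => hex ⟨j, h⟩⟩
end

section
/- For every integer n ≥ 1 and every λ ∈ K, Hom_{I₁}(M(n,λ), K[x]) = 0, i.e., the only I₁-module homomorphism from M(n,λ) to K[x] is the zero map. -/
open Polynomial

set_option synthInstance.maxHeartbeats 1000000
set_option maxHeartbeats 1000000

lemma intOp_derivative (K : Type) [Field K] [CharZero K] (q : Polynomial K) :
    intOp K (derivative q) = q - C (q.coeff 0) := by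
  induction q using Polynomial.induction_on' with
  | add r s hr hs =>
      rw [derivative_add, map_add, hr, hs, coeff_add, C_add]; ring
  | monomial m a =>
      cases m with
      | zero => simp [intOp]
      | succ m =>
          rw [derivative_monomial]
          simp only [intOp, lsum_apply]
          rw [Polynomial.sum_monomial_index _ _ (by simp)]
          rw [Polynomial.coeff_monomial, if_neg (by omega), map_zero, sub_zero,
            Nat.add_sub_cancel, LinearMap.smul_apply, smul_monomial, smul_eq_mul]
          have h1 : ((m : K) + 1) ≠ 0 := Nat.cast_add_one_ne_zero m
          congr 1
          push_cast
          field_simp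

/-- For every integer `n ≥ 1` and every `λ ∈ K`,
`Hom_{I₁}(M(n,λ), K[x]) = 0`. -/
theorem stmt_12 (K : Type) [Field K] [CharZero K] (n : ℕ) (hn : 1 ≤ n) (lam : K) :
    ∀ f : Mmod K n lam →ₗ[I1 K] Polynomial K, f = 0 := by
  intro f
  set p := f (Submodule.Quotient.mk 1) with hp
  have hact : ∀ (a : I1 K) (q : Polynomial K),
      a • q = (a : Module.End K (Polynomial K)) q := fun a q => rfl
  have key : ∀ r ∈ Msub K n lam, ((r : I1 K) : Module.End K (Polynomial K)) p = 0 := by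
    intro r hr
    have h1 : (Submodule.Quotient.mk r : Mmod K n lam) = 0 :=
      (Submodule.Quotient.mk_eq_zero _).2 hr
    have h3 : (Submodule.Quotient.mk r : Mmod K n lam) = r • Submodule.Quotient.mk 1 := by
      rw [← Submodule.Quotient.mk_smul, smul_eq_mul, mul_one]
    have h2 : r • p = 0 := by
      rw [hp, ← map_smul, ← h3, h1, map_zero]
    rw [← hact]; exact h2
  set d : I1 K := ⟨derOp K, Algebra.subset_adjoin (by simp)⟩ with hd
  have hmem : ∀ j : ℕ, eElt K * d ^ j ∈ Msub K n lam := by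
    intro j
    refine (le_sup_left : Fideal K ≤ Msub K n lam) ?_
    exact Ideal.subset_span ⟨1, d ^ j, by rw [one_mul]⟩
  have hco : ∀ j : ℕ, p.coeff j = 0 := by
    intro j
    have hk := key _ (hmem j)
    have hdpow : ((d ^ j : I1 K) : Module.End K (Polynomial K)) p
        = (⇑derivative)^[j] p := by
      rw [show ((d ^ j : I1 K) : Module.End K (Polynomial K))
            = (derOp K) ^ j by push_cast [hd]; rfl]
      rw [Module.End.pow_apply]
      rfl
    set q : Polynomial K := (⇑derivative)^[j] p with hq
    have hcalc : ((eElt K * d ^ j : I1 K) : Module.End K (Polynomial K)) p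
        = C (q.coeff 0) := by
      rw [show ((eElt K * d ^ j : I1 K) : Module.End K (Polynomial K))
            = (1 - intOp K * derOp K) * ((d ^ j : I1 K) : Module.End K (Polynomial K)) by
          push_cast [eElt]; rfl]
      rw [Module.End.mul_apply, hdpow]
      simp only [LinearMap.sub_apply, Module.End.one_apply, Module.End.mul_apply]
      rw [show (derOp K) q = derivative q from rfl, intOp_derivative]
      ring
    rw [hcalc] at hk
    have hq0 : q.coeff 0 = 0 := by
      have := Polynomial.C_eq_zero.mp hk
      exact this
    rw [hq, Polynomial.coeff_iterate_derivative, zero_add, Nat.descFactorial_self,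
      nsmul_eq_mul] at hq0
    have hfac : ((j.factorial : K)) ≠ 0 :=
      Nat.cast_ne_zero.2 (Nat.factorial_ne_zero j)
    exact (mul_eq_zero.mp hq0).resolve_left hfac
  have hp0 : p = 0 := Polynomial.ext fun j => by rw [hco]; simp
  apply LinearMap.ext
  intro x
  obtain ⟨a, rfl⟩ := Submodule.Quotient.mk_surjective _ x
  have h3 : (Submodule.Quotient.mk a : Mmod K n lam) = a • Submodule.Quotient.mk 1 := by
    rw [← Submodule.Quotient.mk_smul, smul_eq_mul, mul_one]
  rw [h3, map_smul, ← hp, hp0, smul_zero]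
  rfl
end

section
/- For every integer n ≥ 1 and every λ ∈ K, Hom_{I₁}(K[x], M(n,λ)) = 0, i.e., the only I₁-module homomorphism from K[x] to M(n,λ) is the zero map. -/
open Polynomial

set_option synthInstance.maxHeartbeats 1000000
set_option maxHeartbeats 1000000

/-- For every integer `n ≥ 1` and every `λ ∈ K`,
`Hom_{I₁}(K[x], M(n,λ)) = 0`. -/
theorem stmt_13 (K : Type) [Field K] [CharZero K] (n : ℕ) (hn : 1 ≤ n) (lam : K) :
    ∀ f : Polynomial K →ₗ[I1 K] Mmod K n lam, f = 0 := by
  intro f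
  have hsmul : ∀ (a : I1 K) (p : Polynomial K),
      a • p = (a : Module.End K (Polynomial K)) p := fun a p => rfl
  -- eElt kills every element of Mmod
  have he0 : ∀ m : Mmod K n lam, eElt K • m = 0 := by
    intro m
    obtain ⟨c, rfl⟩ := Submodule.Quotient.mk_surjective _ m
    have : eElt K • (Submodule.Quotient.mk c : Mmod K n lam)
        = Submodule.Quotient.mk (eElt K * c) := rfl
    rw [this, Submodule.Quotient.mk_eq_zero]
    refine le_sup_left (α := Ideal (I1 K)) ?_
    exact Ideal.subset_span ⟨1, c, by rw [one_mul]⟩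
  -- eElt • 1 = 1 in K[x]
  have he1 : eElt K • (1 : Polynomial K) = 1 := by
    rw [hsmul]
    show (1 : Polynomial K) - (intOp K) ((derOp K) 1) = 1
    simp [derOp]
  have hf1 : f 1 = 0 := by
    rw [← he1, map_smul, he0]
  -- every polynomial is (aeval xI p) • 1
  have xI : I1 K := ⟨xOp K, Algebra.subset_adjoin (by simp)⟩
  have hgen : ∀ p : Polynomial K,
      (Polynomial.aeval (⟨xOp K, Algebra.subset_adjoin (by simp)⟩ : I1 K) p) • (1 : Polynomial K) = p := by
    intro p
    rw [hsmul]
    have h1 : ((Polynomial.aeval (⟨xOp K, Algebra.subset_adjoin (by simp)⟩ : I1 K) p : I1 K) :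
        Module.End K (Polynomial K)) = Polynomial.aeval (xOp K) p :=
      Polynomial.coe_aeval_mk_apply (xOp K) (Algebra.subset_adjoin (by simp))
    rw [h1]
    have h2 : xOp K = Algebra.lmul K (Polynomial K) X :=
      LinearMap.ext fun q => by simp [xOp, Algebra.coe_lmul_eq_mul]
    rw [h2, Polynomial.aeval_algHom_apply (Algebra.lmul K (Polynomial K)) X p,
      Polynomial.aeval_X_left_apply]
    simp [Algebra.coe_lmul_eq_mul]
  ext p
  rw [← hgen p, map_smul, hf1, smul_zero]
  rfl
end

section
/- Let n ≥ 1 be an integer and λ ∈ K with λ ∉ {1, 2, 3, ...}. Then: (a) F·(H−λ)^n = F, i.e., the image of F under right multiplication by (H−λ)^n equals F; (b) F ⊆ I₁(H−λ)^n, and hence M(n,λ) ≅ I₁/I₁(H−λ)^n as left I₁-modules; (c) right multiplication by (H−λ)^n is an injective map I₁ → I₁, so it gives an isomorphism of left I₁-modules I₁ → I₁(H−λ)^n. -/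
open Polynomial

set_option synthInstance.maxHeartbeats 1000000
set_option maxHeartbeats 1000000

set_option linter.unusedSectionVars false
namespace S19
variable (K : Type) [Field K] [CharZero K]

lemma intOp_monomial (m : ℕ) (a : K) :
    intOp K (monomial m a) = ((m : K) + 1)⁻¹ • monomial (m + 1) a := by
  simp [intOp, Polynomial.lsum_apply, Polynomial.sum_monomial_index]

lemma derOp_monomial (m : ℕ) (a : K) :
    derOp K (monomial m a) = monomial (m - 1) (a * m) := by
  simp [derOp, derivative_monomial]

lemma xOp_monomial (m : ℕ) (a : K) : xOp K (monomial m a) = monomial (m + 1) a := by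
  simp [xOp, X_mul_monomial]

lemma DI_op : derOp K * intOp K = 1 := by
  apply Polynomial.lhom_ext'
  intro m
  apply LinearMap.ext; intro a
  have h : ((m : K) + 1) ≠ 0 := Nat.cast_add_one_ne_zero m
  simp [Module.End.mul_apply, intOp_monomial, derOp_monomial, smul_monomial]
  congr 1
  field_simp

lemma ID_succ_op (m : ℕ) (a : K) :
    intOp K (derOp K (monomial (m + 1) a)) = monomial (m + 1) a := by
  have h : ((m : K) + 1) ≠ 0 := Nat.cast_add_one_ne_zero m
  simp [derOp_monomial, intOp_monomial, smul_monomial]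
  congr 1
  field_simp

lemma DX_op : derOp K * xOp K = xOp K * derOp K + 1 := by
  apply Polynomial.lhom_ext'
  intro m
  apply LinearMap.ext; intro a
  cases m with
  | zero => simp [Module.End.mul_apply, xOp, derOp, LinearMap.mulLeft_apply]
  | succ m =>
      simp [Module.End.mul_apply, xOp_monomial, derOp_monomial, LinearMap.add_apply]
      rw [← map_add]
      congr 1
      push_cast
      ring


noncomputable def xE : I1 K := ⟨xOp K, Algebra.subset_adjoin (by simp)⟩
noncomputable def dE : I1 K := ⟨derOp K, Algebra.subset_adjoin (by simp)⟩
noncomputable def iE : I1 K := ⟨intOp K, Algebra.subset_adjoin (by simp)⟩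

lemma Hop_eq : Hop K = dE K * xE K := rfl

lemma eElt_eq : eElt K = 1 - iE K * dE K := rfl

lemma DI : dE K * iE K = 1 := Subtype.ext (DI_op K)

lemma dx : dE K * xE K = xE K * dE K + 1 := Subtype.ext (DX_op K)

lemma eX : eElt K * xE K = 0 := by
  apply Subtype.ext
  show (1 - intOp K * derOp K) * xOp K = 0
  apply Polynomial.lhom_ext'
  intro m
  apply LinearMap.ext; intro a
  simp [Module.End.mul_apply, LinearMap.sub_apply, xOp_monomial, ID_succ_op]

lemma eI : eElt K * iE K = 0 := by
  apply Subtype.ext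
  show (1 - intOp K * derOp K) * intOp K = 0
  apply Polynomial.lhom_ext'
  intro m
  apply LinearMap.ext; intro a
  simp [Module.End.mul_apply, LinearMap.sub_apply, intOp_monomial, ID_succ_op]

lemma eH : eElt K * Hop K = eElt K := by
  rw [Hop_eq, dx, mul_add, ← mul_assoc, eX, mul_one, zero_mul, zero_add]

lemma dH : dE K * Hop K = Hop K * dE K + dE K := by
  calc dE K * Hop K = dE K * (dE K * xE K) := by rw [Hop_eq]
    _ = dE K * (xE K * dE K + 1) := by rw [dx]
    _ = (dE K * xE K) * dE K + dE K := by noncomm_ring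
    _ = Hop K * dE K + dE K := by rw [Hop_eq]

lemma dpowH (j : ℕ) : dE K ^ j * Hop K = Hop K * dE K ^ j + (j : K) • dE K ^ j := by
  induction j with
  | zero => simp
  | succ j ih =>
      have h1 : dE K ^ (j + 1) * Hop K = dE K ^ j * (dE K * Hop K) := by
        rw [pow_succ, mul_assoc]
      rw [h1, dH, mul_add, ← mul_assoc, ih, add_mul, smul_mul_assoc, mul_assoc,
        ← pow_succ, Nat.cast_add, Nat.cast_one, add_smul, one_smul]
      abel

lemma edjH (j : ℕ) :
    (eElt K * dE K ^ j) * Hop K = ((j : K) + 1) • (eElt K * dE K ^ j) := by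
  rw [mul_assoc, dpowH, mul_add, ← mul_assoc, eH, mul_smul_comm, add_smul, one_smul,
    add_comm]

lemma edjg (j : ℕ) (lam : K) (n : ℕ) :
    (eElt K * dE K ^ j) * (Hop K - algebraMap K (I1 K) lam) ^ n
      = (((j : K) + 1 - lam) ^ n) • (eElt K * dE K ^ j) := by
  induction n with
  | zero => simp
  | succ n ih =>
      rw [pow_succ, ← mul_assoc, ih, smul_mul_assoc, mul_sub, edjH,
        Algebra.algebraMap_eq_smul_one, mul_smul_comm, mul_one, ← sub_smul, smul_smul,
        ← pow_succ]

noncomputable def V : Submodule K (I1 K) :=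
  Submodule.span K (Set.range fun j : ℕ => eElt K * dE K ^ j)

lemma edj_mem_V (j : ℕ) : eElt K * dE K ^ j ∈ V K :=
  Submodule.subset_span ⟨j, rfl⟩

lemma djx (j : ℕ) :
    dE K ^ (j + 1) * xE K = xE K * dE K ^ (j + 1) + ((j : K) + 1) • dE K ^ j := by
  induction j with
  | zero => simpa using dx K
  | succ j ih =>
      have h1 : dE K ^ (j + 2) * xE K = dE K * (dE K ^ (j + 1) * xE K) := by
        rw [pow_succ', mul_assoc]
      rw [h1, ih, mul_add, ← mul_assoc, dx, add_mul, one_mul, mul_assoc, ← pow_succ',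
        mul_smul_comm, ← pow_succ']
      push_cast
      rw [show ((j:K) + 1 + 1) • dE K ^ (j+1) = ((j:K)+1) • dE K ^ (j+1) + dE K ^ (j+1) by
        rw [add_smul, one_smul]]
      abel

lemma V_mul_x {v : I1 K} (hv : v ∈ V K) : v * xE K ∈ V K := by
  induction hv using Submodule.span_induction with
  | mem y hy =>
      obtain ⟨j, rfl⟩ := hy
      cases j with
      | zero => simpa [eX] using (V K).zero_mem
      | succ j =>
          rw [mul_assoc, djx, mul_add, ← mul_assoc, eX, zero_mul, zero_add,
            mul_smul_comm]
          exact Submodule.smul_mem _ _ (edj_mem_V K j)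
  | zero => simpa using (V K).zero_mem
  | add y z _ _ hy hz => rw [add_mul]; exact Submodule.add_mem _ hy hz
  | smul c y _ hy => rw [smul_mul_assoc]; exact Submodule.smul_mem _ _ hy

lemma V_mul_d {v : I1 K} (hv : v ∈ V K) : v * dE K ∈ V K := by
  induction hv using Submodule.span_induction with
  | mem y hy =>
      obtain ⟨j, rfl⟩ := hy
      rw [mul_assoc, ← pow_succ]
      exact edj_mem_V K (j + 1)
  | zero => simpa using (V K).zero_mem
  | add y z _ _ hy hz => rw [add_mul]; exact Submodule.add_mem _ hy hz
  | smul c y _ hy => rw [smul_mul_assoc]; exact Submodule.smul_mem _ _ hy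

lemma V_mul_i {v : I1 K} (hv : v ∈ V K) : v * iE K ∈ V K := by
  induction hv using Submodule.span_induction with
  | mem y hy =>
      obtain ⟨j, rfl⟩ := hy
      cases j with
      | zero => simpa [eI] using (V K).zero_mem
      | succ j =>
          have : dE K ^ (j + 1) * iE K = dE K ^ j := by
            rw [pow_succ, mul_assoc, DI, mul_one]
          rw [mul_assoc, this]
          exact edj_mem_V K j
  | zero => simpa using (V K).zero_mem
  | add y z _ _ hy hz => rw [add_mul]; exact Submodule.add_mem _ hy hz
  | smul c y _ hy => rw [smul_mul_assoc]; exact Submodule.smul_mem _ _ hy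

lemma V_mul (b : I1 K) : ∀ v ∈ V K, v * b ∈ V K := by
  obtain ⟨b, hb⟩ := b
  induction hb using Algebra.adjoin_induction with
  | mem y hy =>
      rcases hy with h | h | h
      · subst h; exact fun v hv => V_mul_x K hv
      · subst h; exact fun v hv => V_mul_d K hv
      · subst h; exact fun v hv => V_mul_i K hv
  | algebraMap r =>
      intro v hv
      show v * algebraMap K (I1 K) r ∈ V K
      rw [Algebra.algebraMap_eq_smul_one, mul_smul_comm, mul_one]
      exact Submodule.smul_mem _ _ hv
  | add y z hy hz ihy ihz =>
      intro v hv
      have : v * (⟨y + z, add_mem hy hz⟩ : I1 K) = v * ⟨y, hy⟩ + v * ⟨z, hz⟩ := by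
        apply Subtype.ext; exact mul_add _ _ _
      rw [this]
      exact Submodule.add_mem _ (ihy v hv) (ihz v hv)
  | mul y z hy hz ihy ihz =>
      intro v hv
      have : v * (⟨y * z, mul_mem hy hz⟩ : I1 K) = (v * ⟨y, hy⟩) * ⟨z, hz⟩ := by
        apply Subtype.ext; exact (mul_assoc _ _ _).symm
      rw [this]
      exact ihz _ (ihy v hv)

lemma e_mul_mem (b : I1 K) : eElt K * b ∈ V K := by
  have he : eElt K ∈ V K := by simpa using edj_mem_V K 0
  exact V_mul K b (eElt K) he

lemma Tval_monomial (lam : K) (m : ℕ) (a : K) :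
    (((Hop K - algebraMap K (I1 K) lam) : I1 K) : Module.End K (Polynomial K)) (monomial m a)
      = (((m : K) + 1 - lam)) • monomial m a := by
  have h1 : (((Hop K - algebraMap K (I1 K) lam) : I1 K) : Module.End K (Polynomial K))
      = derOp K * xOp K - algebraMap K (Module.End K (Polynomial K)) lam := by
    push_cast
    rfl
  rw [h1, LinearMap.sub_apply, Module.End.mul_apply, xOp_monomial, derOp_monomial,
    Module.algebraMap_end_apply, smul_monomial]
  simp only [Nat.add_sub_cancel]
  rw [smul_monomial, ← map_sub]
  congr 1
  rw [smul_eq_mul, smul_eq_mul]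
  push_cast
  ring

lemma gval_monomial (lam : K) (n m : ℕ) (a : K) :
    ((((Hop K - algebraMap K (I1 K) lam) ^ n : I1 K)) : Module.End K (Polynomial K))
        (monomial m a)
      = (((m : K) + 1 - lam) ^ n) • monomial m a := by
  induction n with
  | zero => simp
  | succ n ih =>
      have h1 : ((((Hop K - algebraMap K (I1 K) lam) ^ (n + 1) : I1 K))
            : Module.End K (Polynomial K))
          = (((Hop K - algebraMap K (I1 K) lam) : I1 K) : Module.End K (Polynomial K))
            * ((((Hop K - algebraMap K (I1 K) lam) ^ n : I1 K))
                : Module.End K (Polynomial K)) := by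
        push_cast
        rw [pow_succ']
      rw [h1, Module.End.mul_apply, ih, map_smul, Tval_monomial, smul_smul, ← pow_succ]

end S19
/-- Let `n ≥ 1` and `λ ∈ K` with `λ ∉ {1, 2, 3, ...}`. Then
(a) `F·(H-λ)^n = F`; (b) `F ⊆ I₁(H-λ)^n`, hence `M(n,λ) ≅ I₁/I₁(H-λ)^n`;
(c) right multiplication by `(H-λ)^n` is injective on `I₁`, giving an isomorphism of left
`I₁`-modules `I₁ ≅ I₁(H-λ)^n`. -/
theorem stmt_19 (K : Type) [Field K] [CharZero K] (n : ℕ) (hn : 1 ≤ n) (lam : K)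
    (hlam : ∀ m : ℕ, 1 ≤ m → lam ≠ (m : K)) :
    ((fun f : I1 K => f * (Hop K - algebraMap K (I1 K) lam) ^ n) '' (Fideal K : Set (I1 K))
        = (Fideal K : Set (I1 K))) ∧
    ((Fideal K : Set (I1 K)) ⊆
        ((Ideal.span {(Hop K - algebraMap K (I1 K) lam) ^ n} : Ideal (I1 K)) : Set (I1 K))) ∧
    Nonempty (Mmod K n lam ≃ₗ[I1 K]
        (I1 K ⧸ (Ideal.span {(Hop K - algebraMap K (I1 K) lam) ^ n} : Ideal (I1 K)))) ∧
    Function.Injective (fun a : I1 K => a * (Hop K - algebraMap K (I1 K) lam) ^ n) ∧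
    ∃ e : I1 K ≃ₗ[I1 K] (Ideal.span {(Hop K - algebraMap K (I1 K) lam) ^ n} : Ideal (I1 K)),
      ∀ a : I1 K, (e a : I1 K) = a * (Hop K - algebraMap K (I1 K) lam) ^ n := by
  classical
  set g := (Hop K - algebraMap K (I1 K) lam) ^ n with hgdef
  have hc : ∀ j : ℕ, ((j : K) + 1 - lam) ^ n ≠ 0 := by
    intro j
    apply pow_ne_zero
    refine sub_ne_zero_of_ne fun h => ?_
    exact hlam (j + 1) (by omega) (by push_cast; exact h.symm)
  have hVg : ∀ v ∈ S19.V K, ∃ f' ∈ Fideal K, f' * g = v := by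
    intro v hv
    induction hv using Submodule.span_induction with
    | mem y hy =>
        obtain ⟨j, rfl⟩ := hy
        have hmemF : eElt K * S19.dE K ^ j ∈ Fideal K :=
          Ideal.subset_span ⟨1, S19.dE K ^ j, by rw [one_mul]⟩
        refine ⟨(((j : K) + 1 - lam) ^ n)⁻¹ • (eElt K * S19.dE K ^ j), ?_, ?_⟩
        · rw [← algebraMap_smul (I1 K) ((((j : K) + 1 - lam) ^ n)⁻¹) (eElt K * S19.dE K ^ j)]
          exact Submodule.smul_mem _ _ hmemF
        · rw [smul_mul_assoc, hgdef, S19.edjg, smul_smul, inv_mul_cancel₀ (hc j), one_smul]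
    | zero => exact ⟨0, zero_mem _, by rw [zero_mul]⟩
    | add y z _ _ hy hz =>
        obtain ⟨f1, hf1, e1⟩ := hy
        obtain ⟨f2, hf2, e2⟩ := hz
        exact ⟨f1 + f2, add_mem hf1 hf2, by rw [add_mul, e1, e2]⟩
    | smul c y _ hy =>
        obtain ⟨f1, hf1, e1⟩ := hy
        refine ⟨c • f1, ?_, by rw [smul_mul_assoc, e1]⟩
        rw [← algebraMap_smul (I1 K) c f1]
        exact Submodule.smul_mem _ _ hf1
  have hFg : ∀ f ∈ Fideal K, ∃ f' ∈ Fideal K, f' * g = f := by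
    intro f hf
    induction hf using Submodule.span_induction with
    | mem y hy =>
        obtain ⟨a, b, rfl⟩ := hy
        obtain ⟨f', hf', e1⟩ := hVg (eElt K * b) (S19.e_mul_mem K b)
        exact ⟨a * f', Ideal.mul_mem_left _ a hf',
          by rw [mul_assoc, e1, ← mul_assoc]⟩
    | zero => exact ⟨0, zero_mem _, by rw [zero_mul]⟩
    | add y z _ _ hy hz =>
        obtain ⟨f1, hf1, e1⟩ := hy
        obtain ⟨f2, hf2, e2⟩ := hz
        exact ⟨f1 + f2, add_mem hf1 hf2, by rw [add_mul, e1, e2]⟩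
    | smul c y _ hy =>
        obtain ⟨f1, hf1, e1⟩ := hy
        exact ⟨c * f1, Ideal.mul_mem_left _ c hf1,
          by rw [smul_eq_mul, mul_assoc, e1]⟩
  have hgF : ∀ f ∈ Fideal K, f * g ∈ Fideal K := by
    intro f hf
    induction hf using Submodule.span_induction with
    | mem y hy =>
        obtain ⟨a, b, rfl⟩ := hy
        exact Ideal.subset_span ⟨a, b * g, by rw [mul_assoc, mul_assoc]⟩
    | zero => rw [zero_mul]; exact zero_mem _
    | add y z _ _ hy hz => rw [add_mul]; exact add_mem hy hz
    | smul c y _ hy =>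
        rw [smul_eq_mul, mul_assoc]
        exact Ideal.mul_mem_left _ c hy
  have parta : (fun f : I1 K => f * g) '' (Fideal K : Set (I1 K)) = (Fideal K : Set (I1 K)) := by
    ext f
    constructor
    · rintro ⟨f0, hf0, rfl⟩
      exact hgF f0 hf0
    · intro hf
      obtain ⟨f', hf', e1⟩ := hFg f hf
      exact ⟨f', hf', e1⟩
  have partb : (Fideal K : Set (I1 K)) ⊆ ((Ideal.span {g} : Ideal (I1 K)) : Set (I1 K)) := by
    intro f hf
    obtain ⟨f', _, e1⟩ := hFg f hf
    exact Submodule.mem_span_singleton.mpr ⟨f', by rw [smul_eq_mul, e1]⟩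
  have hMsub : Msub K n lam = Ideal.span {g} := by
    rw [show Msub K n lam = Fideal K ⊔ Ideal.span {g} from rfl]
    exact sup_eq_right.mpr partb
  have hsurj : Function.Surjective ((g : I1 K) : Module.End K (Polynomial K)) := by
    intro p
    induction p using Polynomial.induction_on' with
    | add p q hp hq =>
        obtain ⟨p', hp'⟩ := hp
        obtain ⟨q', hq'⟩ := hq
        exact ⟨p' + q', by rw [map_add, hp', hq']⟩
    | monomial m a =>
        refine ⟨(((m : K) + 1 - lam) ^ n)⁻¹ • monomial m a, ?_⟩
        rw [map_smul, hgdef, S19.gval_monomial, smul_smul, inv_mul_cancel₀ (hc m), one_smul]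
  have hinj : Function.Injective (fun a : I1 K => a * g) := by
    intro a b hab
    simp only at hab
    apply Subtype.ext
    apply LinearMap.ext
    intro p
    obtain ⟨q, hq⟩ := hsurj p
    have ha : ((a : Module.End K (Polynomial K))) p
        = ((a * g : I1 K) : Module.End K (Polynomial K)) q := by
      rw [MulMemClass.coe_mul, Module.End.mul_apply, hq]
    have hb : ((b : Module.End K (Polynomial K))) p
        = ((b * g : I1 K) : Module.End K (Polynomial K)) q := by
      rw [MulMemClass.coe_mul, Module.End.mul_apply, hq]
    rw [ha, hab, ← hb]
  have hmemg : ∀ a : I1 K, a * g ∈ (Ideal.span {g} : Ideal (I1 K)) := fun a =>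
    Submodule.mem_span_singleton.mpr ⟨a, by rw [smul_eq_mul]⟩
  let φ : I1 K →ₗ[I1 K] (Ideal.span {g} : Ideal (I1 K)) :=
    { toFun := fun a => ⟨a * g, hmemg a⟩
      map_add' := fun a b => Subtype.ext (add_mul a b g)
      map_smul' := fun r a => Subtype.ext (by simp [smul_eq_mul, mul_assoc]) }
  have hφinj : Function.Injective φ := by
    intro a b h
    exact hinj (congrArg Subtype.val h)
  have hφsurj : Function.Surjective φ := by
    rintro ⟨x, hx⟩
    obtain ⟨b, hb⟩ := Submodule.mem_span_singleton.mp hx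
    exact ⟨b, Subtype.ext (by show b * g = x; rw [← smul_eq_mul]; exact hb)⟩
  exact ⟨parta, partb, ⟨Submodule.quotEquivOfEq _ _ hMsub⟩, hinj,
    LinearEquiv.ofBijective φ ⟨hφinj, hφsurj⟩, fun a => rfl⟩
end
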